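/- Let N, n_x, n_u be natural numbers and set n = N(n_x+n_u) + n_x and p = (N+1)n_x. For each stage j < N let A_j ∈ ℝ^{n_x×n_x} and B_j ∈ ℝ^{n_x×n_u}. Let M ∈ ℝ^{p×n} be the block matrix whose 0-th block row is (I_{n_x}, 0, …, 0) and whose (j+1)-th block row (for j < N) has −A_j in the x^j columns, −B_j in the u^j columns, I_{n_x} in the x^{j+1} columns, and zeros elsewhere. Then the linear map ℝ^n → ℝ^p induced by M is surjective, i.e. M has full row rank. -/
import Mathlib


open Matrix

/-- Auxiliary: the state trajectory solving the dynamics with zero inputs and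
affine terms given by `y`. -/
def Xv (N nx : ℕ) (A : Fin N → Matrix (Fin nx) (Fin nx) ℝ)
    (y : Fin (N + 1) × Fin nx → ℝ) : ℕ → Fin nx → ℝ
  | 0 => fun r => y (0, r)
  | k + 1 =>
    if h : k < N then
      fun r => y (⟨k + 1, Nat.succ_lt_succ h⟩, r)
        + ((A ⟨k, h⟩).mulVec (Xv N nx A y k)) r
    else 0

/-- The equality-constraint matrix `M` of the OCP (encoding the initial condition and
the linear dynamics) has full row rank: the induced linear map is surjective. -/
theorem stmt_3 (N nx nu : ℕ)
    (A : Fin N → Matrix (Fin nx) (Fin nx) ℝ)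
    (B : Fin N → Matrix (Fin nx) (Fin nu) ℝ)
    -- the constraint matrix M: block row 0 is (I, 0, …, 0); block row j+1 has
    -- −A_j in the x^j columns, −B_j in the u^j columns and I in the x^{j+1} columns.
    (M : Matrix (Fin (N + 1) × Fin nx) (((Fin nx ⊕ Fin nu) × Fin N) ⊕ Fin nx) ℝ)
    (hM : M = Matrix.of fun p c =>
      match c with
      | Sum.inl (Sum.inl s, j) =>
          (if p.1 = j.castSucc ∧ p.2 = s then (1 : ℝ) else 0)
            + (if p.1 = j.succ then -(A j p.2 s) else 0)
      | Sum.inl (Sum.inr s, j) => if p.1 = j.succ then -(B j p.2 s) else 0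
      | Sum.inr s => if p.1 = Fin.last N ∧ p.2 = s then (1 : ℝ) else 0) :
    Function.Surjective M.mulVec := by
  intro y
  set X := Xv N nx A y with hX
  refine ⟨fun c => match c with
    | Sum.inl (Sum.inl s, j) => X j s
    | Sum.inl (Sum.inr _, _) => 0
    | Sum.inr s => X N s, ?_⟩
  funext p
  obtain ⟨i, r⟩ := p
  subst hM
  simp only [Matrix.mulVec, dotProduct, Fintype.sum_sum_type, Fintype.sum_prod_type,
    Matrix.of_apply, mul_zero, Finset.sum_const_zero, add_zero, ite_and]
  -- simplify the three blocks
  have h1 : ∀ j : Fin N, ∀ s : Fin nx,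
      ((if i = j.castSucc then if r = s then (1:ℝ) else 0 else 0)
        + (if i = j.succ then -(A j r s) else 0)) * X j s
      = (if i = j.castSucc then (if r = s then X j s else 0) else 0)
        + (if i = j.succ then -(A j r s) * X j s else 0) := by
    intro j s
    rw [add_mul]
    split_ifs <;> simp
  simp only [h1, Finset.sum_add_distrib]
  rcases Fin.eq_zero_or_eq_succ i with hi | ⟨k, hk⟩
  · subst hi
    by_cases hN : N = 0
    · subst hN
      simp [X, Xv, Finset.sum_ite_eq, ite_mul,
        show (Fin.last 0) = 0 from Fin.last_zero]
    · have hc1 : ∀ j : Fin N, ((0 : Fin (N+1)) = j.castSucc) ↔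
          ((⟨0, Nat.pos_of_ne_zero hN⟩ : Fin N) = j) := by
        intro j; simp [Fin.ext_iff]
      have hc2 : ∀ j : Fin N, ¬((0 : Fin (N+1)) = j.succ) := by
        intro j h
        simp [Fin.ext_iff] at h
      have hc3 : ¬((0 : Fin (N+1)) = Fin.last N) := by
        simp [Fin.ext_iff]; omega
      simp [hc1, hc2, hc3, Finset.sum_ite_eq, X, Xv]
  · subst hk
    have hc2 : ∀ j : Fin N, (k.succ = j.succ) ↔ (k = j) := by
      intro j; exact Fin.succ_inj
    by_cases hk2 : (k : ℕ) + 1 < N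
    · have hc1 : ∀ j : Fin N, (k.succ = j.castSucc) ↔
          ((⟨(k : ℕ) + 1, hk2⟩ : Fin N) = j) := by
        intro j; simp [Fin.ext_iff]
      have hc3 : ¬(k.succ = Fin.last N) := by
        simp [Fin.ext_iff]; omega
      simp only [hc1, hc2, hc3, if_false, Finset.sum_ite_eq, Finset.mem_univ,
        if_true, zero_mul, Finset.sum_const_zero, add_zero]
      have hkN : (k : ℕ) < N := k.isLt
      have hXs : X ((k : ℕ) + 1) r = y (k.succ, r) + ((A k).mulVec (X (k : ℕ))) r := by
        rw [hX]
        simp only [Xv]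
        rw [dif_pos hkN]
        rfl
      rw [hXs]
      simp only [Matrix.mulVec, dotProduct, neg_mul, Finset.sum_neg_distrib]
      ring
    · have hN' : (k : ℕ) + 1 = N := by have := k.isLt; omega
      have hc1 : ∀ j : Fin N, ¬(k.succ = j.castSucc) := by
        intro j h
        have hj := j.isLt
        rw [Fin.ext_iff] at h
        simp at h
        omega
      have hc3 : (k.succ = Fin.last N) := by
        rw [Fin.ext_iff]; simpa using hN'
      have hc3' : (k.succ = Fin.last N) = True := by simp [hc3]
      simp only [hc1, hc2, hc3', if_true, if_false, Finset.sum_const_zero,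
        Finset.sum_ite_eq, Finset.mem_univ, zero_add, ite_mul, one_mul, zero_mul]
      have hkN : (k : ℕ) < N := k.isLt
      have hXr : X N r = y (k.succ, r) + ((A k).mulVec (X (k : ℕ))) r := by
        have h' : X N r = X ((k : ℕ) + 1) r := by rw [hN']
        rw [h', hX]
        simp only [Xv]
        rw [dif_pos hkN]
        rfl
      rw [hXr]
      simp only [Matrix.mulVec, dotProduct, neg_mul, Finset.sum_neg_distrib]
      ring
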